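/- arXiv:1212.0463 — 2 statements merged into one kernel-verified Lean document; each statement's English description precedes it below -/
import Mathlib

section
/- Sauer–Shelah style growth bound: if a collection 𝒞 of subsets of a set 𝕌 has VC dimension d < ∞, then for every n ≥ 1 the growth function satisfies G(n, 𝒞) ≤ (n+1)^d, where G(n, 𝒞) is the maximum over sets S ⊆ 𝕌 of cardinality n of the number of distinct subsets of S of the form S ∩ C for C ∈ 𝒞. -/
/-- `𝒞` shatters a finite set `S` if every subset of `S` is of the form `S ∩ C`
for some `C ∈ 𝒞`. -/
def SetShatters {U : Type*} (𝒞 : Set (Set U)) (S : Finset U) : Prop :=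
  ∀ S' : Set U, S' ⊆ (S : Set U) → ∃ C ∈ 𝒞, S' = (S : Set U) ∩ C

lemma sum_choose_le_pow (d n : ℕ) :
    ∑ k ∈ Finset.Iic d, n.choose k ≤ (n + 1) ^ d := by
  have hIic : Finset.Iic d = Finset.range (d + 1) := by
    ext k; simp [Nat.lt_succ_iff]
  rw [hIic, add_pow n 1 d]
  refine Finset.sum_le_sum fun k hk => ?_
  rw [Finset.mem_range, Nat.lt_succ_iff] at hk
  calc n.choose k ≤ n ^ k := Nat.choose_le_pow n k
    _ = n ^ k * 1 ^ (d - k) * 1 := by ring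
    _ ≤ n ^ k * 1 ^ (d - k) * d.choose k :=
        Nat.mul_le_mul_left _ (Nat.choose_pos hk)

/-- Sauer–Shelah style growth bound: if the VC dimension of `𝒞` is at most `d`
(no shattered set has cardinality exceeding `d`), then for every `n ≥ 1` the
growth function satisfies `G(n, 𝒞) ≤ (n+1)^d`: every `n`-point set `S` admits at
most `(n+1)^d` distinct traces `S ∩ C`, `C ∈ 𝒞`. -/
theorem growth_function_bound {U : Type*} (𝒞 : Set (Set U)) (d : ℕ)
    (hVC : ∀ S : Finset U, SetShatters 𝒞 S → S.card ≤ d)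
    (n : ℕ) (hn : 1 ≤ n) (S : Finset U) (hS : S.card = n) :
    Set.ncard {T : Set U | ∃ C ∈ 𝒞, T = (S : Set U) ∩ C} ≤ (n + 1) ^ d := by
  classical
  set Tr : Set (Set U) := {T : Set U | ∃ C ∈ 𝒞, T = (S : Set U) ∩ C}
  -- the trace family as a finset of finsets of the subtype
  set 𝒜 : Finset (Finset {x // x ∈ S}) :=
    Finset.univ.filter (fun t : Finset {x // x ∈ S} =>
      ((t.map (Function.Embedding.subtype _) : Finset U) : Set U) ∈ Tr) with h𝒜
  -- the map from traces into 𝒜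
  set g : Set U → Finset {x // x ∈ S} :=
    fun T => Finset.univ.filter (fun x : {x // x ∈ S} => (x : U) ∈ T) with hg
  have hgcoe : ∀ T ∈ Tr, (((g T).map (Function.Embedding.subtype _) : Finset U) : Set U) = T := by
    rintro T ⟨C, hC, rfl⟩
    ext x
    simp only [Finset.coe_map, Set.mem_image, Finset.mem_coe, g, Finset.mem_filter,
      Finset.mem_univ, true_and]
    constructor
    · rintro ⟨y, hy, rfl⟩; exact hy
    · intro hx; exact ⟨⟨x, hx.1⟩, hx, rfl⟩
  have hmaps : ∀ T ∈ Tr, g T ∈ 𝒜 := by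
    intro T hT
    simp only [h𝒜, Finset.mem_filter, Finset.mem_univ, true_and]
    rw [hgcoe T hT]; exact hT
  have hinj : Set.InjOn g Tr := by
    intro T₁ h₁ T₂ h₂ he
    rw [← hgcoe T₁ h₁, ← hgcoe T₂ h₂, he]
  have h1 : Tr.ncard ≤ 𝒜.card := by
    rw [← Set.ncard_coe_finset]
    exact Set.ncard_le_ncard_of_injOn g hmaps hinj (Finset.finite_toSet _)
  -- VC dimension bound
  have hvc : 𝒜.vcDim ≤ d := by
    refine Finset.sup_le fun s hs => ?_
    rw [Finset.mem_shatterer] at hs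
    have hcard : (s.map (Function.Embedding.subtype _) : Finset U).card = s.card :=
      Finset.card_map _
    rw [← hcard]
    apply hVC
    intro S' hS'
    -- t : elements of s whose image lies in S'
    set t : Finset {x // x ∈ S} := s.filter (fun x => (x : U) ∈ S') with ht
    obtain ⟨u, hu, hsu⟩ := hs (Finset.filter_subset (fun x : {x // x ∈ S} => (x : U) ∈ S') s)
    simp only [h𝒜, Finset.mem_filter, Finset.mem_univ, true_and] at hu
    obtain ⟨C, hC, huC⟩ := hu
    refine ⟨C, hC, ?_⟩
    ext x
    constructor
    · intro hx
      have hxs : x ∈ ((s.map (Function.Embedding.subtype _) : Finset U) : Set U) := hS' hx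
      simp only [Finset.coe_map, Set.mem_image, Finset.mem_coe] at hxs
      obtain ⟨y, hy, rfl⟩ := hxs
      have hyt : y ∈ s ∩ u := by
        rw [hsu]; exact Finset.mem_filter.2 ⟨hy, hx⟩
      have : (y : U) ∈ ((u.map (Function.Embedding.subtype _) : Finset U) : Set U) := by
        simp only [Finset.coe_map, Set.mem_image, Finset.mem_coe]
        exact ⟨y, (Finset.mem_inter.1 hyt).2, rfl⟩
      rw [huC] at this
      exact ⟨by simpa using hS' hx, this.2⟩
    · rintro ⟨hxS, hxC⟩
      simp only [Finset.coe_map, Set.mem_image, Finset.mem_coe] at hxS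
      obtain ⟨y, hy, rfl⟩ := hxS
      have hxu : (y : U) ∈ ((u.map (Function.Embedding.subtype _) : Finset U) : Set U) := by
        rw [huC]; exact ⟨y.2, hxC⟩
      simp only [Finset.coe_map, Set.mem_image, Finset.mem_coe] at hxu
      obtain ⟨z, hz, hzy⟩ := hxu
      have : z = y := Subtype.ext hzy
      subst this
      have : z ∈ s ∩ u := Finset.mem_inter.2 ⟨hy, hz⟩
      rw [hsu, Finset.mem_filter] at this
      exact this.2
  have h2 : 𝒜.card ≤ 𝒜.shatterer.card := Finset.card_le_card_shatterer 𝒜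
  have h3 : 𝒜.shatterer.card ≤ ∑ k ∈ Finset.Iic 𝒜.vcDim, (Fintype.card {x // x ∈ S}).choose k :=
    Finset.card_shatterer_le_sum_vcDim
  have hcardS : Fintype.card {x // x ∈ S} = n := by
    rw [Fintype.card_coe, hS]
  rw [hcardS] at h3
  have h4 : ∑ k ∈ Finset.Iic 𝒜.vcDim, n.choose k ≤ ∑ k ∈ Finset.Iic d, n.choose k :=
    Finset.sum_le_sum_of_subset (Finset.Iic_subset_Iic.2 hvc)
  calc Tr.ncard ≤ 𝒜.card := h1
    _ ≤ _ := h2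
    _ ≤ _ := h3
    _ ≤ _ := h4
    _ ≤ (n + 1) ^ d := sum_choose_le_pow d n
end

section
/- Oracle loss upper rate under exponential β-mixing: suppose 0 ≤ ℓ < K and a uniform deviation bound P(sup_{f∈ℱ}|Rₙ(f) − R̂ₙ(f)| > ε) ≤ 8(2μ+1)^h exp(−με²/K₁²) + 2μβ_{a−d} holds for all integers μ, a with 2μa + d ≤ n, where β_a = c₁exp(−c₂a^κ). Then for sufficiently large n there is a constant C (independent of n and h) with E[Rₙ(f̂_erm) − Rₙ(f*)] ≤ C·√(h·log n / n^{κ/(1+κ)}), obtained by taking aₙ = n^{1/(1+κ)} and μₙ = n^{κ/(1+κ)} and integrating the tail bound. -/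
open MeasureTheory Real

set_option maxHeartbeats 1600000 in
/-- Oracle loss upper rate under exponential β-mixing: if the loss is bounded by
`K`, the mixing coefficients decay as `β_a = c₁ exp(−c₂ a^κ)`, and the uniform
deviation bound
`P(sup_f |Rₙ(f) − R̂ₙ(f)| > ε) ≤ 8(2μ+1)^h exp(−με²/K₁²) + 2μ β_{a−d}`
holds for all integers `μ, a` with `2μa + d ≤ n`, then for sufficiently large
`n` there is a constant `C` (independent of `n` and `h`) such that
`E[Rₙ(f̂_erm) − Rₙ(f*)] ≤ C √(h log n / n^{κ/(1+κ)})`. -/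
theorem oracle_rate_beta_mixing
    {Ω ℱ : Type*} [MeasurableSpace Ω] (P : Measure Ω) [IsProbabilityMeasure P]
    (K K₁ c₁ c₂ κ : ℝ) (hK : 0 < K) (hK₁ : 0 < K₁)
    (hc₁ : 0 < c₁) (hc₂ : 0 < c₂) (hκ : 0 < κ)
    (h d : ℕ) (hh : 0 < h)
    (Rn : ℕ → ℱ → ℝ) (Rhat : ℕ → ℱ → Ω → ℝ)
    (ferm : ℕ → Ω → ℱ) (fstar : ℕ → ℱ)
    (hRnK : ∀ n f, 0 ≤ Rn n f ∧ Rn n f ≤ K)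
    (hRhatK : ∀ n f ω, 0 ≤ Rhat n f ω ∧ Rhat n f ω ≤ K)
    (herm : ∀ n ω f, Rhat n (ferm n ω) ω ≤ Rhat n f ω)
    (hstar : ∀ n f, Rn n (fstar n) ≤ Rn n f)
    (hint : ∀ n, Integrable (fun ω => Rn n (ferm n ω)) P)
    (hdev : ∀ (n μ a : ℕ), 0 < μ → d < a → 2 * μ * a + d ≤ n →
      ∀ ε : ℝ, 0 < ε →
        P {ω | ∃ f, ε < |Rn n f - Rhat n f ω|} ≤
          ENNReal.ofReal (8 * (2 * μ + 1 : ℝ) ^ h * Real.exp (-μ * ε ^ 2 / K₁ ^ 2)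
            + 2 * μ * (c₁ * Real.exp (-c₂ * ((a : ℝ) - d) ^ κ)))) :
    ∃ C > 0, ∃ N : ℕ, ∀ n ≥ N,
      (∫ ω, Rn n (ferm n ω) ∂P) - Rn n (fstar n) ≤
        C * Real.sqrt (h * Real.log n / (n : ℝ) ^ (κ / (1 + κ))) := by
  have hκ1 : (0:ℝ) < 1 + κ := by linarith
  set q : ℝ := κ / (1 + κ) with hq
  set p : ℝ := 1 / (1 + κ) with hp
  have hq0 : 0 < q := div_pos hκ hκ1
  have hp0 : 0 < p := by positivity
  have hpq : p + q = 1 := by rw [hp, hq]; field_simp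
  have hq1 : q ≤ 1 := by rw [hq, div_le_one hκ1]; linarith
  have hpκ : p * κ = q := by rw [hp, hq]; field_simp
  -- eventual conditions
  have hev : ∀ᶠ n : ℕ in Filter.atTop,
      3 ≤ n ∧ ((d:ℝ) + 1 ≤ (n:ℝ) ^ p) ∧ ((16:ℝ) ≤ (n:ℝ) ^ q) ∧ (8*(d+1) ≤ n)
        ∧ ((8*K)^2 ≤ (n:ℝ))
        ∧ (2*K*c₁ * (((n:ℝ)^q) ^ ((3:ℝ)/(2*q)) * Real.exp (-c₂ * (n:ℝ)^q)) < 1) := by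
    have hcast : Filter.Tendsto (fun n : ℕ => (n:ℝ)) Filter.atTop Filter.atTop :=
      tendsto_natCast_atTop_atTop
    have h2 := ((tendsto_rpow_atTop hp0).comp hcast).eventually_ge_atTop ((d:ℝ)+1)
    have h3 := ((tendsto_rpow_atTop hq0).comp hcast).eventually_ge_atTop (16:ℝ)
    have h5 := hcast.eventually_ge_atTop ((8*K)^2)
    have h6 : Filter.Tendsto
        (fun n : ℕ => 2*K*c₁ * (((n:ℝ)^q) ^ ((3:ℝ)/(2*q)) * Real.exp (-c₂ * (n:ℝ)^q)))
        Filter.atTop (nhds 0) := by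
      have hbase := tendsto_rpow_mul_exp_neg_mul_atTop_nhds_zero ((3:ℝ)/(2*q)) c₂ hc₂
      have hcomp := hbase.comp ((tendsto_rpow_atTop hq0).comp hcast)
      have h0 := hcomp.const_mul (2*K*c₁)
      rw [mul_zero] at h0
      exact h0.congr (fun n => by simp [Function.comp])
    filter_upwards [Filter.eventually_ge_atTop 3, h2, h3,
      Filter.eventually_ge_atTop (8*(d+1)), h5, h6.eventually_lt_const one_pos] with n e1 e2 e3 e4 e5 e6
    exact ⟨e1, e2, e3, e4, e5, e6⟩
  rw [Filter.eventually_atTop] at hev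
  obtain ⟨N, hN⟩ := hev
  refine ⟨12*K₁ + 2, by positivity, N, ?_⟩
  intro n hn
  obtain ⟨hn3, hC2, hC3, hC4, hC5, hC6⟩ := hN n hn
  set x : ℝ := (n:ℝ) with hxdef
  have hx3 : (3:ℝ) ≤ x := by rw [hxdef]; exact_mod_cast hn3
  have hx0 : (0:ℝ) < x := by linarith
  have hx1 : (1:ℝ) ≤ x := by linarith
  have hlx : 1 ≤ Real.log x := by
    rw [Real.le_log_iff_exp_le hx0]
    have := Real.exp_one_lt_d9
    linarith
  have hlx0 : 0 < Real.log x := by linarith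
  have hh1 : (1:ℝ) ≤ (h:ℝ) := by exact_mod_cast hh
  have hxp0 : (0:ℝ) < x ^ p := Real.rpow_pos_of_pos hx0 p
  have hxq0 : (0:ℝ) < x ^ q := Real.rpow_pos_of_pos hx0 q
  have hxsplit : x = x ^ p * x ^ q := by
    rw [← Real.rpow_add hx0, hpq, Real.rpow_one]
  -- the block length a and the number of blocks μ
  set A : ℕ := ⌊x ^ p⌋₊ + d + 1 with hAdef
  have hA1 : 1 ≤ A := by omega
  have hAd : d < A := by omega
  have hAR0 : (0:ℝ) < (A:ℝ) := by exact_mod_cast hA1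
  have hAub : (A:ℝ) ≤ 2 * x ^ p := by
    have h1 : ((⌊x ^ p⌋₊ : ℝ)) ≤ x ^ p := Nat.floor_le hxp0.le
    have : (A:ℝ) = (⌊x ^ p⌋₊ : ℝ) + d + 1 := by push_cast [hAdef]; ring
    rw [this]; linarith
  set μ : ℕ := ⌊x / (4*A)⌋₊ with hμdef
  have hdivpos : (0:ℝ) < x / (4*A) := by positivity
  have hdiv_ge : x ^ q / 8 ≤ x / (4*A) := by
    have h1 : x / (8 * x ^ p) ≤ x / (4*A) := by
      apply div_le_div_of_nonneg_left hx0.le (by positivity)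
      linarith
    have h2 : x / (8 * x ^ p) = x ^ q / 8 := by
      rw [div_eq_div_iff (by positivity) (by norm_num)]
      linear_combination 8 * hxsplit
    linarith
  have hμ2 : (2:ℝ) ≤ x / (4*A) := by linarith
  have hone : (1:ℝ) ≤ x / (4*(A:ℝ)) := by linarith
  have hμ1 : 1 ≤ μ := Nat.le_floor (by exact_mod_cast hone)
  have hμpos : 0 < μ := hμ1
  have hμR0 : (0:ℝ) < (μ:ℝ) := by exact_mod_cast hμpos
  have hμub : (μ:ℝ) ≤ x / (4*A) := Nat.floor_le hdivpos.le
  have hμlow : x ^ q / 16 ≤ (μ:ℝ) := by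
    have h1 : x / (4*A) < (μ:ℝ) + 1 := Nat.lt_floor_add_one _
    linarith
  clear_value A μ
  have hcond : 2 * μ * A + d ≤ n := by
    have h1 : 2 * (μ:ℝ) * A ≤ 2 * (x / (4*A)) * A := by
      have h0 := mul_le_mul_of_nonneg_right hμub hAR0.le
      linarith
    have h2 : 2 * (x / (4*A)) * A = x / 2 := by field_simp; ring
    have h3 : (d:ℝ) ≤ x / 2 := by
      have h4 : ((8*(d+1) : ℕ) : ℝ) ≤ x := by rw [hxdef]; exact_mod_cast hC4
      push_cast at h4; linarith
    have hR : ((2 * μ * A + d : ℕ) : ℝ) ≤ ((n:ℕ):ℝ) := by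
      push_cast
      rw [← hxdef]
      linarith [h1.trans_eq h2]
    exact_mod_cast hR
  have h2μ1 : (2*(μ:ℝ)+1) ≤ x := by
    have hA4 : (4:ℝ) ≤ 4*(A:ℝ) := by
      have : (1:ℝ) ≤ (A:ℝ) := by exact_mod_cast hA1
      linarith
    have : x / (4*A) ≤ x / 4 := div_le_div_of_nonneg_left hx0.le (by norm_num) hA4
    have h5 := hμub.trans this
    linarith
  -- the threshold s
  have hargpos : 0 < 2*(h:ℝ)*Real.log x / μ := by positivity
  set s : ℝ := K₁ * Real.sqrt (2*(h:ℝ)*Real.log x / μ) with hsdef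
  have hs0 : 0 < s := by positivity
  -- the probability bound applied with ε = s
  have hPB := hdev n μ A hμpos hAd hcond s hs0
  set T1 : ℝ := 8 * (2 * (μ:ℝ) + 1) ^ h * Real.exp (-(μ:ℝ) * s ^ 2 / K₁ ^ 2) with hT1def
  set T2 : ℝ := 2 * (μ:ℝ) * (c₁ * Real.exp (-c₂ * ((A : ℝ) - d) ^ κ)) with hT2def
  have hT1pos : 0 < T1 := by positivity
  have hT2pos : 0 < T2 := by positivity
  -- the excess risk
  set Z : Ω → ℝ := fun ω => Rn n (ferm n ω) - Rn n (fstar n) with hZdef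
  have hZint : Integrable Z P := (hint n).sub (integrable_const _)
  have hZ0 : ∀ ω, 0 ≤ Z ω := fun ω => sub_nonneg.2 (hstar n _)
  have hZK : ∀ ω, Z ω ≤ K := fun ω => by
    have h1 := (hRnK n (ferm n ω)).2
    have h2 := (hRnK n (fstar n)).1
    simp only [hZdef]; linarith
  have hZB : ∀ ω, 2*s < Z ω → ω ∈ {ω | ∃ f, s < |Rn n f - Rhat n f ω|} := by
    intro ω hω
    by_contra hB
    simp only [Set.mem_setOf_eq, not_exists, not_lt] at hB
    have h1 := abs_le.1 (hB (ferm n ω))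
    have h2 := abs_le.1 (hB (fstar n))
    have h3 := herm n ω (fstar n)
    simp only [hZdef] at hω
    linarith [h1.1, h1.2, h2.1, h2.2]
  set Aset : Set Ω := {ω | 2*s < Z ω} with hAsetdef
  have hAmeas : NullMeasurableSet Aset P :=
    nullMeasurableSet_lt aemeasurable_const hZint.1.aemeasurable
  have hsplit : ∫ ω, Z ω ∂P = (∫ ω in Aset, Z ω ∂P) + ∫ ω in Asetᶜ, Z ω ∂P :=
    (integral_add_compl₀ hAmeas hZint).symm
  have hIA : ∫ ω in Aset, Z ω ∂P ≤ K * (P Aset).toReal := by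
    calc ∫ ω in Aset, Z ω ∂P ≤ ∫ _ω in Aset, K ∂P :=
          integral_mono hZint.restrict (integrable_const _) hZK
      _ = (P Aset).toReal * K := by
          rw [setIntegral_const, smul_eq_mul, measureReal_def]
      _ = K * (P Aset).toReal := mul_comm _ _
  have hIAc : ∫ ω in Asetᶜ, Z ω ∂P ≤ 2*s := by
    have hle1 : (P Asetᶜ).toReal ≤ 1 := by
      have h7 := prob_le_one (μ := P) (s := Asetᶜ)
      simpa using ENNReal.toReal_mono ENNReal.one_ne_top h7
    calc ∫ ω in Asetᶜ, Z ω ∂P ≤ ∫ _ω in Asetᶜ, (2*s) ∂P := by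
          apply integral_mono_ae hZint.restrict (integrable_const _)
          filter_upwards [ae_restrict_mem₀ hAmeas.compl] with ω hω
          have h8 : ¬ (2*s < Z ω) := hω
          linarith [not_lt.1 h8]
      _ = (P Asetᶜ).toReal * (2*s) := by rw [setIntegral_const, smul_eq_mul, measureReal_def]
      _ ≤ 1 * (2*s) := mul_le_mul_of_nonneg_right hle1 (by linarith)
      _ = 2*s := one_mul _
  have hPA : (P Aset).toReal ≤ T1 + T2 := by
    have hsub : Aset ⊆ {ω | ∃ f, s < |Rn n f - Rhat n f ω|} := fun ω hω => hZB ω hω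
    have hle := (measure_mono hsub).trans hPB
    have := ENNReal.toReal_mono ENNReal.ofReal_ne_top hle
    rwa [ENNReal.toReal_ofReal (by positivity)] at this
  have hEZ : ∫ ω, Z ω ∂P ≤ 2*s + K * (T1 + T2) := by
    have : K * (P Aset).toReal ≤ K * (T1 + T2) :=
      mul_le_mul_of_nonneg_left hPA hK.le
    linarith [hsplit, hIA, hIAc]
  -- numeric bounds
  set g : ℝ := Real.sqrt ((h:ℝ) * Real.log x / x ^ q) with hgdef
  have hg0 : 0 < g := by positivity
  have hbound1 : 2*s ≤ 12*K₁*g := by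
    have harg : 2*(h:ℝ)*Real.log x / μ ≤ 32 * ((h:ℝ) * Real.log x / x ^ q) := by
      have h1 : 2*(h:ℝ)*Real.log x / μ ≤ 2*(h:ℝ)*Real.log x / (x ^ q / 16) :=
        div_le_div_of_nonneg_left (by positivity) (by positivity) hμlow
      have h2 : 2*(h:ℝ)*Real.log x / (x ^ q / 16) = 32 * ((h:ℝ) * Real.log x / x ^ q) := by
        field_simp; ring
      linarith
    have hsq : Real.sqrt (2*(h:ℝ)*Real.log x / μ) ≤ Real.sqrt 32 * g := by
      rw [hgdef, ← Real.sqrt_mul (by norm_num : (0:ℝ) ≤ 32)]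
      exact Real.sqrt_le_sqrt harg
    have h32 : Real.sqrt 32 ≤ 6 := by
      have : Real.sqrt 32 ≤ Real.sqrt 36 := Real.sqrt_le_sqrt (by norm_num)
      have h36 : Real.sqrt 36 = 6 := by
        rw [show (36:ℝ) = 6^2 by norm_num, Real.sqrt_sq (by norm_num)]
      linarith
    have : s ≤ K₁ * (6 * g) := by
      rw [hsdef]
      have := hsq.trans (mul_le_mul_of_nonneg_right h32 hg0.le)
      exact mul_le_mul_of_nonneg_left this hK₁.le
    linarith
  have hinvsq : 1 / Real.sqrt x ≤ g := by
    have hxq_le : x ^ q ≤ x := by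
      have := Real.rpow_le_rpow_of_exponent_le hx1 hq1
      rwa [Real.rpow_one] at this
    have h1 : 1 / x ≤ (h:ℝ) * Real.log x / x ^ q := by
      have h2 : 1 / x ≤ 1 / x ^ q := by
        apply div_le_div_of_nonneg_left one_pos.le hxq0 hxq_le
      have h15 : (1:ℝ) ≤ (h:ℝ) * Real.log x := by
        calc (1:ℝ) = 1 * 1 := by ring
          _ ≤ (h:ℝ) * Real.log x := mul_le_mul hh1 hlx one_pos.le (by linarith)
      have h3 : 1 / x ^ q ≤ (h:ℝ) * Real.log x / x ^ q :=
        div_le_div_of_nonneg_right h15 hxq0.le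
      linarith
    have h2 := Real.sqrt_le_sqrt h1
    rwa [Real.sqrt_div (by norm_num) x, Real.sqrt_one] at h2
  have hsqx0 : 0 < Real.sqrt x := Real.sqrt_pos.2 hx0
  -- Bound on the first deviation term
  have hssq : s^2 = K₁^2 * (2*(h:ℝ)*Real.log x / μ) := by
    rw [hsdef, mul_pow, Real.sq_sqrt hargpos.le]
  have hexp_eq : -(μ:ℝ) * s ^ 2 / K₁ ^ 2 = -(2*(h:ℝ)) * Real.log x := by
    rw [hssq]; field_simp
  have hxr : x ^ (-(2*(h:ℝ))) = Real.exp (-(2*(h:ℝ)) * Real.log x) := by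
    rw [Real.rpow_def_of_pos hx0]; ring_nf
  have hT1eq : T1 = 8 * (2 * (μ:ℝ) + 1) ^ h * x ^ (-(2*(h:ℝ))) := by
    rw [hT1def, hexp_eq, hxr]
  have hp1 : (2*(μ:ℝ)+1)^h ≤ x^h := pow_le_pow_left₀ (by linarith) h2μ1 h
  have hx2h0 : (0:ℝ) < x ^ (-(2*(h:ℝ))) := Real.rpow_pos_of_pos hx0 _
  have hxh : x ^ h * x ^ (-(2*(h:ℝ))) = x ^ (-(h:ℝ)) := by
    rw [← Real.rpow_natCast x h, ← Real.rpow_add hx0]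
    congr 1
    ring
  have hT1le : T1 ≤ 8 / x := by
    have h9 : x ^ (-(h:ℝ)) ≤ x⁻¹ := by
      have h9' := Real.rpow_le_rpow_of_exponent_le hx1 (show -(h:ℝ) ≤ -1 by linarith)
      rwa [Real.rpow_neg_one] at h9'
    calc T1 = 8 * ((2 * (μ:ℝ) + 1) ^ h * x ^ (-(2*(h:ℝ)))) := by rw [hT1eq]; ring
      _ ≤ 8 * (x ^ h * x ^ (-(2*(h:ℝ)))) := by
          have := mul_le_mul_of_nonneg_right hp1 hx2h0.le
          linarith
      _ = 8 * x ^ (-(h:ℝ)) := by rw [hxh]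
      _ ≤ 8 * x⁻¹ := by linarith
      _ = 8 / x := by rw [div_eq_mul_inv]
  have hKT1g : K * T1 ≤ g := by
    have h10 : K * T1 ≤ 8*K/x := by
      calc K*T1 ≤ K*(8/x) := mul_le_mul_of_nonneg_left hT1le hK.le
        _ = 8*K/x := by ring
    have h12 : 8*K ≤ Real.sqrt x := (Real.le_sqrt (by positivity) hx0.le).2 hC5
    have h11 : 8*K/x ≤ 1/Real.sqrt x := by
      rw [div_le_div_iff₀ hx0 hsqx0]
      have h13 : 8*K*Real.sqrt x ≤ Real.sqrt x * Real.sqrt x :=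
        mul_le_mul_of_nonneg_right h12 hsqx0.le
      rw [Real.mul_self_sqrt hx0.le] at h13
      linarith
    linarith
  -- Bound on the mixing term
  have hAdR : x ^ p ≤ (A:ℝ) - d := by
    have h14 := Nat.lt_floor_add_one (x ^ p)
    have h14' : (A:ℝ) - d = (⌊x ^ p⌋₊ : ℝ) + 1 := by rw [hAdef]; push_cast; ring
    linarith
  have hκpow : x ^ q ≤ ((A:ℝ) - d) ^ κ := by
    have h16 : (x ^ p) ^ κ ≤ ((A:ℝ) - d) ^ κ :=
      Real.rpow_le_rpow (Real.rpow_nonneg hx0.le p) hAdR hκ.le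
    rwa [← Real.rpow_mul hx0.le, hpκ] at h16
  have hexp2 : Real.exp (-c₂ * ((A:ℝ)-d)^κ) ≤ Real.exp (-c₂ * x ^ q) := by
    apply Real.exp_le_exp.2
    have := mul_le_mul_of_nonneg_left hκpow hc₂.le
    linarith
  have hμx : (μ:ℝ) ≤ x := by linarith
  have hT2le : K * T2 ≤ 2*K*c₁ * (x * Real.exp (-c₂ * x^q)) := by
    rw [hT2def]
    calc K * (2 * (μ:ℝ) * (c₁ * Real.exp (-c₂ * ((A:ℝ)-d)^κ)))
        = 2*K*c₁ * ((μ:ℝ) * Real.exp (-c₂ * ((A:ℝ)-d)^κ)) := by ring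
      _ ≤ 2*K*c₁ * (x * Real.exp (-c₂ * x^q)) := by
          apply mul_le_mul_of_nonneg_left ?_ (by positivity)
          exact mul_le_mul hμx hexp2 (Real.exp_pos _).le hx0.le
  have hKT2g : K * T2 ≤ g := by
    have h18 : ((x^q) : ℝ) ^ ((3:ℝ)/(2*q)) = x * Real.sqrt x := by
      rw [← Real.rpow_mul hx0.le]
      have hq32 : q * ((3:ℝ)/(2*q)) = 1 + (1:ℝ)/2 := by
        field_simp
        ring
      rw [hq32, Real.rpow_add hx0, Real.rpow_one, ← Real.sqrt_eq_rpow]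
    have h17 : 2*K*c₁ * (x * Real.exp (-c₂ * x^q)) ≤ 1 / Real.sqrt x := by
      rw [le_div_iff₀ hsqx0]
      have h19 := hC6.le
      rw [h18] at h19
      ring_nf at h19 ⊢
      linarith
    linarith [hT2le, h17, hinvsq]
  -- Conclusion
  have hZeq : ∫ ω, Z ω ∂P = (∫ ω, Rn n (ferm n ω) ∂P) - Rn n (fstar n) := by
    simp only [hZdef]
    rw [integral_sub (hint n) (integrable_const _), integral_const]
    simp
  rw [← hZeq]
  have hdist : K * (T1 + T2) = K*T1 + K*T2 := by ring
  linarith [hEZ, hbound1, hKT1g, hKT2g]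
end
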